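/- Let a, b be distinct points of the open unit disk 𝔹² ⊂ ℂ. Define cen := (a(1−|b|²) + b(1−|a|²))/(2 − a·conj(b) − conj(a)·b), the hyperbolic midpoint m := (a(1−|b|²) + b(1−|a|²))/(1 − |a|²|b|² + √((1−|a|²)(1−|b|²))·|1 − conj(a)·b|), and t := tanh(ρ(a,b)/4). Then cen = m(1 − t²)/(1 − |m|²·t²). (Consequently the Euclidean disk B²(cen, |cen − a|) coincides with the hyperbolic disk of center m and radius ρ(a,b)/2.) -/

import Mathlib

open Complex

/-- The hyperbolic distance of the unit disk:
`ρ(x,y) = 2·arsinh(|x−y|/√((1−|x|²)(1−|y|²)))`. -/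
noncomputable def hypDist (x y : ℂ) : ℝ :=
  2 * Real.arsinh (‖x - y‖ /
    Real.sqrt ((1 - (‖x‖)^2) * (1 - (‖y‖)^2)))

lemma tanh_half (w : ℝ) : Real.tanh (w/2) = (Real.exp w - 1)/(Real.exp w + 1) := by
  have hE : 0 < Real.exp (w/2) := Real.exp_pos _
  have h2 : Real.exp w = Real.exp (w/2) * Real.exp (w/2) := by
    rw [← Real.exp_add]; ring_nf
  rw [Real.tanh_eq_sinh_div_cosh, Real.sinh_eq, Real.cosh_eq, h2, Real.exp_neg]
  have hne : Real.exp (w/2) + (Real.exp (w/2))⁻¹ ≠ 0 := by positivity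
  have hne2 : Real.exp (w/2) * Real.exp (w/2) + 1 ≠ 0 := by positivity
  field_simp

set_option maxHeartbeats 1000000 in
/-- Lemma 2.4 (second claim): with `m` the hyperbolic midpoint of `a,b` and
`t = tanh(ρ(a,b)/4)`, one has `cen = m(1−t²)/(1−|m|²t²)`; consequently the Euclidean disk
`B²(cen,|cen−a|)` is the hyperbolic disk of center `m` and radius `ρ(a,b)/2`. -/
theorem stmt_4 (a b : ℂ) (ha : ‖a‖ < 1) (hb : ‖b‖ < 1) (hab : a ≠ b) :
    let cen : ℂ := (a * (1 - (‖b‖ : ℂ)^2) + b * (1 - (‖a‖ : ℂ)^2)) /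
      (2 - a * (starRingEnd ℂ b) - (starRingEnd ℂ a) * b)
    let m : ℂ := (a * (1 - (‖b‖ : ℂ)^2) + b * (1 - (‖a‖ : ℂ)^2)) /
      ((1 : ℂ) - (‖a‖ : ℂ)^2 * (‖b‖ : ℂ)^2 +
        ((Real.sqrt ((1 - (‖a‖)^2) * (1 - (‖b‖)^2)) : ℝ) : ℂ) *
          ((‖1 - (starRingEnd ℂ a) * b‖ : ℝ) : ℂ))
    let t : ℝ := Real.tanh (hypDist a b / 4)
    cen = m * (1 - (t : ℂ)^2) / (1 - (‖m‖ : ℂ)^2 * (t : ℂ)^2) := by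
  intro cen m t
  -- real quantities
  set A : ℝ := 1 - (‖a‖)^2 with hA_def
  set B : ℝ := 1 - (‖b‖)^2 with hB_def
  set L : ℝ := ‖1 - (starRingEnd ℂ a) * b‖ with hL_def
  set S : ℝ := Real.sqrt (A * B) with hS_def
  set d : ℝ := ‖a - b‖ with hd_def
  have hA : 0 < A := by
    have := norm_nonneg a; rw [hA_def]; nlinarith
  have hB : 0 < B := by
    have := norm_nonneg b; rw [hB_def]; nlinarith
  have hd0 : 0 < d := by
    rw [hd_def]; exact norm_pos_iff.mpr (sub_ne_zero.mpr hab)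
  have hS2 : S^2 = A*B := Real.sq_sqrt (by positivity)
  have hS0 : 0 < S := Real.sqrt_pos.mpr (by positivity)
  have hL2 : L^2 = A*B + d^2 := by
    rw [hL_def, hA_def, hB_def, hd_def]
    simp only [Complex.sq_norm, Complex.normSq_apply, Complex.sub_re, Complex.sub_im,
      Complex.mul_re, Complex.mul_im, Complex.one_re, Complex.one_im,
      Complex.conj_re, Complex.conj_im]
    ring
  have hL0 : 0 < L := by
    have h0 : 0 ≤ L := by rw [hL_def]; exact norm_nonneg _
    nlinarith
  have hLS : S < L := by nlinarith
  -- value of t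
  have hyp : hypDist a b / 4 = Real.arsinh (d / S) / 2 := by
    rw [hypDist, ← hd_def, ← hA_def, ← hB_def, ← hS_def]; ring
  have hsqrt : Real.sqrt (1 + (d/S)^2) = L / S := by
    have h1 : 1 + (d/S)^2 = (L/S)^2 := by
      field_simp
      nlinarith [hL2, hS2]
    rw [h1, Real.sqrt_sq (by positivity)]
  have ht : t = (d + L - S)/(d + L + S) := by
    rw [show t = Real.tanh (hypDist a b / 4) from rfl, hyp, tanh_half, Real.exp_arsinh, hsqrt]
    rw [← add_div]
    rw [div_sub_one (by positivity), div_add_one (by positivity)]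
    rw [div_div_div_comm, div_self hS0.ne', div_one]
  have ht2 : t^2 * (L + S) = L - S := by
    rw [ht, div_pow, div_mul_eq_mul_div, div_eq_iff (by positivity)]
    nlinarith [hL2, hS2]
  -- complex numerator and rewrites
  set N : ℂ := a * (1 - (‖b‖ : ℂ)^2) + b * (1 - (‖a‖ : ℂ)^2) with hN_def
  have hcB : (1 : ℂ) - (‖b‖ : ℂ)^2 = ((B:ℝ):ℂ) := by
    rw [hB_def]; push_cast; ring
  have hcA : (1 : ℂ) - (‖a‖ : ℂ)^2 = ((A:ℝ):ℂ) := by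
    rw [hA_def]; push_cast; ring
  have hNab : N = a * ((B:ℝ):ℂ) + b * ((A:ℝ):ℂ) := by rw [hN_def, hcA, hcB]
  set Dm : ℝ := A + B - A*B + S*L with hDm_def
  set Dc : ℝ := d^2 + A + B with hDc_def
  have hDm0 : 0 < Dm := by nlinarith
  have hDc0 : 0 < Dc := by positivity
  have h1 : (2 : ℂ) - a * (starRingEnd ℂ b) - (starRingEnd ℂ a) * b = ((Dc:ℝ):ℂ) := by
    have hre : Dc = 2 - 2*(a * (starRingEnd ℂ b)).re := by
      rw [hDc_def, hd_def, hA_def, hB_def]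
      simp only [Complex.sq_norm, Complex.normSq_apply, Complex.sub_re, Complex.sub_im,
        Complex.mul_re, Complex.conj_re, Complex.conj_im]
      ring
    have hconj : (starRingEnd ℂ a) * b = starRingEnd ℂ (a * (starRingEnd ℂ b)) := by
      rw [map_mul, Complex.conj_conj]
    rw [hconj, sub_sub, Complex.add_conj, hre]
    push_cast
    ring
  have h2 : (1 : ℂ) - (‖a‖ : ℂ)^2 * (‖b‖ : ℂ)^2 + ((S:ℝ):ℂ) * ((L:ℝ):ℂ)
      = ((Dm:ℝ):ℂ) := by
    rw [hDm_def, hA_def, hB_def]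
    push_cast
    ring
  have hn2 : (‖N‖)^2 = (A+B-A*B)^2 - A*B*L^2 := by
    rw [hNab, hA_def, hB_def, hL_def]
    simp only [Complex.sq_norm, Complex.normSq_apply, Complex.add_re, Complex.add_im,
      Complex.mul_re, Complex.mul_im, Complex.ofReal_re, Complex.ofReal_im,
      Complex.sub_re, Complex.sub_im, Complex.one_re, Complex.one_im,
      Complex.conj_re, Complex.conj_im]
    ring
  have hm : m = N / ((Dm:ℝ):ℂ) := by
    rw [show m = N / ((1 : ℂ) - (‖a‖ : ℂ)^2 * (‖b‖ : ℂ)^2 +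
      ((S:ℝ):ℂ) * ((L:ℝ):ℂ)) from rfl, h2]
  -- the main polynomial identity
  have hfin : Dm^2 * (L+S) - ((A+B-A*B)^2 - A*B*L^2)*(L-S) = 2*S*Dm*Dc := by
    have hd2 : d^2 = L^2 - A*B := by linarith [hL2]
    rw [hDm_def, hDc_def, hd2]
    linear_combination (-(L^2*(L-S))) * hS2
  -- the real scalar identity
  have e0 : (‖N‖)^2/Dm^2*t^2 * (Dm^2*(L+S)) = (‖N‖)^2 * (t^2*(L+S)) := by
    field_simp
  have hq : (1 - (‖N‖)^2/Dm^2*t^2) * (Dm^2*(L+S)) = 2*S*Dm*Dc := by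
    rw [sub_mul, one_mul, e0, ht2, hn2]
    linear_combination hfin
  have hq' : 1 - (‖N‖)^2/Dm^2*t^2 = 2*S*Dm*Dc/(Dm^2*(L+S)) := by
    rw [eq_div_iff (by positivity)]
    exact hq
  have h1t : 1 - t^2 = 2*S/(L+S) := by
    rw [eq_div_iff (by positivity)]
    linear_combination -ht2
  have hscal : Dm * (1 - (‖N‖)^2 / Dm^2 * t^2) = (1 - t^2) * Dc := by
    rw [hq', h1t]
    field_simp
  -- put it together
  show N / (2 - a * (starRingEnd ℂ b) - (starRingEnd ℂ a) * b)
      = m * (1 - (t : ℂ)^2) / (1 - (‖m‖ : ℂ)^2 * (t : ℂ)^2)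
  rw [h1, hm]
  have habsm : (‖N / ((Dm:ℝ):ℂ)‖)^2 = (‖N‖)^2 / Dm^2 := by
    rw [norm_div, Complex.norm_real, Real.norm_eq_abs, abs_of_pos hDm0, div_pow]
  have e3 : ((‖N / ((Dm:ℝ):ℂ)‖ : ℝ):ℂ)^2 = (((‖N‖)^2/Dm^2 : ℝ):ℂ) := by
    rw [← Complex.ofReal_pow, habsm]
  have e1 : (1 - ((t:ℝ):ℂ)^2) = ((1 - t^2 : ℝ):ℂ) := by push_cast; ring
  have e2 : (1 : ℂ) - (((‖N‖)^2 / Dm^2 : ℝ):ℂ) * ((t:ℝ):ℂ)^2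
      = ((1 - (‖N‖)^2 / Dm^2 * t^2 : ℝ):ℂ) := by push_cast; ring
  rw [e3, e1, e2, div_mul_eq_mul_div, div_div, ← Complex.ofReal_mul]
  have hY0 : (1 : ℝ) - (‖N‖)^2 / Dm^2 * t^2 ≠ 0 := by
    intro h
    apply absurd hscal
    rw [h, mul_zero]
    have h1tp : 0 < 1 - t^2 := by
      rw [h1t]; positivity
    positivity
  rw [div_eq_div_iff (by exact_mod_cast hDc0.ne') (by
    rw [Complex.ofReal_ne_zero]; exact mul_ne_zero hDm0.ne' hY0)]
  rw [mul_assoc, ← Complex.ofReal_mul, hscal]
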